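/- In the discrete classification setting with cross-entropy loss, the global optimum of the joint objective L(f, π) = E_{x,y} E_s E_{i∼π(x_s)}[ℓ(f(x_s ∪ x_i), y)] over predictors f and stochastic policies π is achieved by the Bayes classifier f*(x_s) = p(y | x_s) together with any policy placing all probability mass on argmax_i I(y; x_i | x_s); if the maximizing index is unique for every subset s with positive probability, the optimal policy is unique. -/

import Mathlib

noncomputable section

/-- The set of full feature vectors agreeing with `x` on the subset `s`. -/
def agreeSet7 {d : ℕ} {V : Type*} [Fintype V] [DecidableEq V]
    (s : Finset (Fin d)) (x : Fin d → V) : Finset (Fin d → V) :=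
  Finset.univ.filter fun x' => ∀ i ∈ s, x' i = x i

/-- The Bayes classifier: conditional pmf `p(y | x_s)`. -/
def bayes7 {d : ℕ} {V Y : Type*} [Fintype V] [DecidableEq V] [Fintype Y]
    (p : (Fin d → V) → Y → ℝ) (s : Finset (Fin d)) (x : Fin d → V) (y : Y) : ℝ :=
  (∑ x' ∈ agreeSet7 s x, p x' y) / (∑ x' ∈ agreeSet7 s x, ∑ y', p x' y')

/-- Expected posterior entropy of querying feature `i` given observed values `x_s`:
`E_{x_i | x_s}[H(y | x_i, x_s)] = H(y | x_s) - I(y; x_i | x_s)`, so minimizing this cost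
over `i` is the same as maximizing the conditional mutual information `I(y; x_i | x_s)`. -/
def cost7 {d : ℕ} {V Y : Type*} [Fintype V] [DecidableEq V] [Fintype Y]
    (p : (Fin d → V) → Y → ℝ) (s : Finset (Fin d)) (x : Fin d → V) (i : Fin d) : ℝ :=
  ∑ x' ∈ agreeSet7 s x,
    ((∑ y, p x' y) / (∑ x'' ∈ agreeSet7 s x, ∑ y, p x'' y)) *
      (-∑ y, bayes7 p (insert i s) x' y * Real.log (bayes7 p (insert i s) x' y))

/-- The joint objective `L(f, π) = E_{x,y} E_s E_{i ∼ π(x_s)} [ℓ(f(x_s ∪ x_i), y)]` with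
cross-entropy loss `ℓ(ŷ, y) = -log ŷ_y`. -/
def obj7 {d : ℕ} {V Y : Type*} [Fintype V] [DecidableEq V] [Fintype Y]
    (p : (Fin d → V) → Y → ℝ) (ps : Finset (Fin d) → ℝ)
    (f : Finset (Fin d) → (Fin d → V) → Y → ℝ)
    (π : Finset (Fin d) → (Fin d → V) → Fin d → ℝ) : ℝ :=
  ∑ x, ∑ y, p x y * ∑ s, ps s * ∑ i, π s x i * (-Real.log (f (insert i s) x y))

namespace Opt7

variable {d : ℕ} {V Y : Type*} [Fintype V] [DecidableEq V] [Fintype Y]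

lemma mem_agree7 {s : Finset (Fin d)} {x x' : Fin d → V} :
    x' ∈ agreeSet7 s x ↔ ∀ i ∈ s, x' i = x i := by
  simp [agreeSet7]

lemma self_mem_agree7 {s : Finset (Fin d)} {x : Fin d → V} : x ∈ agreeSet7 s x :=
  mem_agree7.mpr fun _ _ => rfl

lemma agree7_eq_of_mem {s : Finset (Fin d)} {x x' : Fin d → V}
    (h : x' ∈ agreeSet7 s x) : agreeSet7 s x' = agreeSet7 s x := by
  rw [mem_agree7] at h
  ext x''
  simp only [mem_agree7]
  exact ⟨fun h2 i hi => (h2 i hi).trans (h i hi), fun h2 i hi => (h2 i hi).trans (h i hi).symm⟩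

lemma fib_le (s : Finset (Fin d)) (u w : (Fin d → V) → ℝ)
    (h : ∀ x, ∑ x' ∈ agreeSet7 s x, u x' ≤ ∑ x' ∈ agreeSet7 s x, w x') :
    ∑ x, u x ≤ ∑ x, w x := by
  classical
  have key : ∀ (v : (Fin d → V) → ℝ), ∑ x, v x
      = ∑ b : (↑s → V), ∑ x ∈ Finset.univ.filter (fun x => (fun i : ↑s => x i.1) = b), v x :=
    fun v => (Finset.sum_fiberwise _ _ _).symm
  rw [key u, key w]
  apply Finset.sum_le_sum
  intro b _
  by_cases hb : (Finset.univ.filter (fun x : Fin d → V => (fun i : ↑s => x i.1) = b)).Nonempty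
  · obtain ⟨x₀, hx₀⟩ := hb
    have hx₀' : (fun i : ↑s => x₀ i.1) = b := (Finset.mem_filter.mp hx₀).2
    have hfib : Finset.univ.filter (fun x : Fin d → V => (fun i : ↑s => x i.1) = b)
        = agreeSet7 s x₀ := by
      ext x'
      simp only [Finset.mem_filter, Finset.mem_univ, true_and, mem_agree7]
      constructor
      · intro hb' i hi
        exact congrFun (hb'.trans hx₀'.symm) ⟨i, hi⟩
      · intro h'
        rw [← hx₀']
        funext i
        exact h' i.1 i.2
    rw [hfib]
    exact h x₀
  · rw [Finset.not_nonempty_iff_eq_empty.mp hb]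
    simp

lemma fib_eq (s : Finset (Fin d)) (u w : (Fin d → V) → ℝ)
    (h : ∀ x, ∑ x' ∈ agreeSet7 s x, u x' = ∑ x' ∈ agreeSet7 s x, w x') :
    ∑ x, u x = ∑ x, w x :=
  le_antisymm (fib_le s u w fun x => (h x).le) (fib_le s w u fun x => (h x).ge)

lemma bayes7_congr {p : (Fin d → V) → Y → ℝ} {s : Finset (Fin d)} {x x' : Fin d → V}
    (h : x' ∈ agreeSet7 s x) : bayes7 p s x' = bayes7 p s x := by
  funext y
  unfold bayes7
  rw [agree7_eq_of_mem h]

lemma cost7_congr {p : (Fin d → V) → Y → ℝ} {s : Finset (Fin d)} {x x' : Fin d → V}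
    (h : x' ∈ agreeSet7 s x) (i : Fin d) : cost7 p s x' i = cost7 p s x i := by
  unfold cost7
  rw [agree7_eq_of_mem h]

end Opt7

namespace Opt7

variable {d : ℕ} {V Y : Type*} [Fintype V] [DecidableEq V] [Fintype Y]

-- class-level sums
lemma class_CE (p : (Fin d → V) → Y → ℝ) (s' : Finset (Fin d))
    (w : (Fin d → V) → ℝ)
    (hw_meas : ∀ x x', (∀ i ∈ s', x i = x' i) → w x = w x')
    (g : (Fin d → V) → Y → ℝ)
    (hg_meas : ∀ x x', (∀ i ∈ s', x i = x' i) → g x = g x')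
    (x : Fin d → V) :
    ∑ x' ∈ agreeSet7 s' x, w x' * ∑ y, p x' y * (-Real.log (g x' y))
      = w x * ∑ y, (∑ x' ∈ agreeSet7 s' x, p x' y) * (-Real.log (g x y)) := by
  have h1 : ∀ x' ∈ agreeSet7 s' x,
      w x' * ∑ y, p x' y * (-Real.log (g x' y))
        = w x * ∑ y, p x' y * (-Real.log (g x y)) := by
    intro x' hx'
    have hag : ∀ i ∈ s', x' i = x i := mem_agree7.mp hx'
    rw [hw_meas x' x hag, hg_meas x' x hag]
  rw [Finset.sum_congr rfl h1, ← Finset.mul_sum, Finset.sum_comm]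
  congr 1
  apply Finset.sum_congr rfl
  intro y _
  rw [Finset.sum_mul]

lemma bayes7_val (p : (Fin d → V) → Y → ℝ) (s' : Finset (Fin d)) {x x' : Fin d → V}
    (h : x' ∈ agreeSet7 s' x) (y : Y) :
    bayes7 p s' x' y
      = (∑ x'' ∈ agreeSet7 s' x, p x'' y) / (∑ x'' ∈ agreeSet7 s' x, ∑ y', p x'' y') := by
  rw [bayes7_congr h]
  rfl

lemma gibbs7 [Nonempty Y] (p : (Fin d → V) → Y → ℝ) (hp_pos : ∀ x y, 0 < p x y)
    (s' : Finset (Fin d))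
    (g : (Fin d → V) → Y → ℝ) (hg_pos : ∀ x y, 0 < g x y) (hg_sum : ∀ x, ∑ y, g x y = 1)
    (hg_meas : ∀ x x', (∀ i ∈ s', x i = x' i) → g x = g x')
    (w : (Fin d → V) → ℝ) (hw : ∀ x, 0 ≤ w x)
    (hw_meas : ∀ x x', (∀ i ∈ s', x i = x' i) → w x = w x') :
    ∑ x, w x * ∑ y, p x y * (-Real.log (bayes7 p s' x y)) ≤
      ∑ x, w x * ∑ y, p x y * (-Real.log (g x y)) := by
  apply fib_le
  intro x
  have hbm : ∀ x₁ x₂ : Fin d → V, (∀ i ∈ s', x₁ i = x₂ i) → bayes7 p s' x₁ = bayes7 p s' x₂ :=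
    fun x₁ x₂ h => bayes7_congr (mem_agree7.mpr h)
  rw [class_CE p s' w hw_meas _ hbm, class_CE p s' w hw_meas g hg_meas]
  set q : Y → ℝ := fun y => ∑ x' ∈ agreeSet7 s' x, p x' y with hq_def
  set Q : ℝ := ∑ x' ∈ agreeSet7 s' x, ∑ y', p x' y' with hQ_def
  have hAne : (agreeSet7 s' x).Nonempty := ⟨x, self_mem_agree7⟩
  have hq : ∀ y, 0 < q y := fun y => Finset.sum_pos (fun x' _ => hp_pos x' y) hAne
  have hQ : 0 < Q := Finset.sum_pos
    (fun x' _ => Finset.sum_pos (fun y _ => hp_pos x' y) Finset.univ_nonempty) hAne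
  have hQq : Q = ∑ y, q y := by rw [hQ_def, hq_def, Finset.sum_comm]
  have hbval : ∀ y, bayes7 p s' x y = q y / Q := fun y => bayes7_val p s' self_mem_agree7 y
  apply mul_le_mul_of_nonneg_left _ (hw x)
  simp only [hbval]
  -- core Gibbs inequality
  have key : ∀ y : Y, q y * (-Real.log (q y / Q)) + (q y - g x y * Q)
      ≤ q y * (-Real.log (g x y)) := by
    intro y
    have hgy : 0 < g x y := hg_pos x y
    have hqy : 0 < q y := hq y
    have hlog : Real.log (g x y * Q / q y) ≤ g x y * Q / q y - 1 :=
      Real.log_le_sub_one_of_pos (by positivity)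
    have e1 : Real.log (g x y * Q / q y)
        = Real.log (g x y) + Real.log Q - Real.log (q y) := by
      rw [Real.log_div (by positivity) hqy.ne',
        Real.log_mul (ne_of_gt (hg_pos x y)) (ne_of_gt hQ)]
    have e2 : Real.log (q y / Q) = Real.log (q y) - Real.log Q :=
      Real.log_div hqy.ne' hQ.ne'
    have h3 : q y * Real.log (g x y * Q / q y) ≤ q y * (g x y * Q / q y - 1) :=
      mul_le_mul_of_nonneg_left hlog (hq y).le
    have h4 : q y * (g x y * Q / q y - 1) = g x y * Q - q y := by
      field_simp [hqy.ne']
    rw [e1] at h3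
    rw [e2]
    nlinarith [h3, h4]
  calc ∑ y, q y * (-Real.log (q y / Q))
      = ∑ y, (q y * (-Real.log (q y / Q)) + (q y - g x y * Q)) := by
        rw [Finset.sum_add_distrib, Finset.sum_sub_distrib, ← hQq, ← Finset.sum_mul,
          hg_sum x, one_mul]
        ring
    _ ≤ ∑ y, q y * (-Real.log (g x y)) := Finset.sum_le_sum fun y _ => key y

end Opt7

namespace Opt7

variable {d : ℕ} {V Y : Type*} [Fintype V] [DecidableEq V] [Fintype Y]

lemma lemB [Nonempty Y] (p : (Fin d → V) → Y → ℝ) (hp_pos : ∀ x y, 0 < p x y)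
    (s' : Finset (Fin d))
    (w : (Fin d → V) → ℝ)
    (hw_meas : ∀ x x', (∀ i ∈ s', x i = x' i) → w x = w x') :
    ∑ x, w x * ∑ y, p x y * (-Real.log (bayes7 p s' x y))
      = ∑ x, w x * ((∑ y, p x y) *
          (-∑ y, bayes7 p s' x y * Real.log (bayes7 p s' x y))) := by
  apply fib_eq
  intro x
  have hbm : ∀ x₁ x₂ : Fin d → V, (∀ i ∈ s', x₁ i = x₂ i) → bayes7 p s' x₁ = bayes7 p s' x₂ :=
    fun x₁ x₂ h => bayes7_congr (mem_agree7.mpr h)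
  rw [class_CE p s' w hw_meas _ hbm]
  set q : Y → ℝ := fun y => ∑ x' ∈ agreeSet7 s' x, p x' y with hq_def
  set Q : ℝ := ∑ x' ∈ agreeSet7 s' x, ∑ y', p x' y' with hQ_def
  have hAne : (agreeSet7 s' x).Nonempty := ⟨x, self_mem_agree7⟩
  have hQ : 0 < Q := Finset.sum_pos
    (fun x' _ => Finset.sum_pos (fun y _ => hp_pos x' y) Finset.univ_nonempty) hAne
  have hbval : ∀ y, bayes7 p s' x y = q y / Q := fun y => bayes7_val p s' self_mem_agree7 y
  -- RHS
  have hrhs : ∀ x' ∈ agreeSet7 s' x,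
      w x' * ((∑ y, p x' y) * (-∑ y, bayes7 p s' x' y * Real.log (bayes7 p s' x' y)))
        = w x * ((∑ y, p x' y) * (-∑ y, (q y / Q) * Real.log (q y / Q))) := by
    intro x' hx'
    have hag : ∀ i ∈ s', x' i = x i := mem_agree7.mp hx'
    rw [hw_meas x' x hag, bayes7_congr hx']
    simp only [hbval]
  rw [Finset.sum_congr rfl hrhs]
  have step : ∑ x' ∈ agreeSet7 s' x,
      w x * ((∑ y, p x' y) * (-∑ y, (q y / Q) * Real.log (q y / Q)))
      = w x * (Q * (-∑ y, (q y / Q) * Real.log (q y / Q))) := by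
    rw [← Finset.mul_sum, ← Finset.sum_mul]
  rw [step]
  congr 1
  simp only [hbval, mul_neg, Finset.sum_neg_distrib]
  congr 1
  rw [Finset.mul_sum]
  apply Finset.sum_congr rfl
  intro y _
  field_simp
  rfl

end Opt7

namespace Opt7

variable {d : ℕ} {V Y : Type*} [Fintype V] [DecidableEq V] [Fintype Y]

lemma lemD [Nonempty Y] (p : (Fin d → V) → Y → ℝ) (hp_pos : ∀ x y, 0 < p x y)
    (s : Finset (Fin d))
    (σ : (Fin d → V) → Fin d → ℝ)
    (hσ_meas : ∀ x x', (∀ i ∈ s, x i = x' i) → σ x = σ x') :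
    ∑ x, ∑ i, σ x i * ((∑ y, p x y) *
        (-∑ y, bayes7 p (insert i s) x y * Real.log (bayes7 p (insert i s) x y)))
      = ∑ x, (∑ y, p x y) * ∑ i, σ x i * cost7 p s x i := by
  apply fib_eq
  intro x
  set M : ℝ := ∑ x' ∈ agreeSet7 s x, ∑ y, p x' y with hM_def
  have hAne : (agreeSet7 s x).Nonempty := ⟨x, self_mem_agree7⟩
  have hM : 0 < M := Finset.sum_pos
    (fun x' _ => Finset.sum_pos (fun y _ => hp_pos x' y) Finset.univ_nonempty) hAne
  have hcost : ∀ i, ∑ x' ∈ agreeSet7 s x, (∑ y, p x' y) *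
      (-∑ y, bayes7 p (insert i s) x' y * Real.log (bayes7 p (insert i s) x' y))
        = M * cost7 p s x i := by
    intro i
    rw [cost7, Finset.mul_sum]
    apply Finset.sum_congr rfl
    intro x' _
    rw [← hM_def]
    field_simp
  -- LHS over class
  have hL : ∀ x' ∈ agreeSet7 s x,
      ∑ i, σ x' i * ((∑ y, p x' y) *
        (-∑ y, bayes7 p (insert i s) x' y * Real.log (bayes7 p (insert i s) x' y)))
      = ∑ i, σ x i * ((∑ y, p x' y) *
        (-∑ y, bayes7 p (insert i s) x' y * Real.log (bayes7 p (insert i s) x' y))) := by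
    intro x' hx'
    have hag : ∀ j ∈ s, x' j = x j := mem_agree7.mp hx'
    rw [hσ_meas x' x hag]
  have hR : ∀ x' ∈ agreeSet7 s x,
      (∑ y, p x' y) * ∑ i, σ x' i * cost7 p s x' i
      = (∑ y, p x' y) * ∑ i, σ x i * cost7 p s x i := by
    intro x' hx'
    have hag : ∀ j ∈ s, x' j = x j := mem_agree7.mp hx'
    rw [hσ_meas x' x hag]
    congr 1
    apply Finset.sum_congr rfl
    intro i _
    rw [cost7_congr hx']
  rw [Finset.sum_congr rfl hL, Finset.sum_congr rfl hR, Finset.sum_comm]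
  have : ∀ i ∈ (Finset.univ : Finset (Fin d)),
      ∑ x' ∈ agreeSet7 s x, σ x i * ((∑ y, p x' y) *
        (-∑ y, bayes7 p (insert i s) x' y * Real.log (bayes7 p (insert i s) x' y)))
      = σ x i * (M * cost7 p s x i) := by
    intro i _
    rw [← Finset.mul_sum, hcost i]
  rw [Finset.sum_congr rfl this, ← Finset.sum_mul, ← hM_def]
  rw [Finset.mul_sum]
  apply Finset.sum_congr rfl
  intro i _
  ring

end Opt7

namespace Opt7

variable {d : ℕ} {V Y : Type*} [Fintype V] [DecidableEq V] [Fintype Y]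

lemma sum4_comm {α β γ δ : Type*} [Fintype α] [Fintype β] [Fintype γ] [Fintype δ]
    (F : α → β → γ → δ → ℝ) :
    ∑ a, ∑ b, ∑ c, ∑ e, F a b c e = ∑ c, ∑ e, ∑ a, ∑ b, F a b c e := by
  calc ∑ a, ∑ b, ∑ c, ∑ e, F a b c e
      = ∑ a, ∑ c, ∑ b, ∑ e, F a b c e :=
        Finset.sum_congr rfl (fun a _ => Finset.sum_comm)
    _ = ∑ c, ∑ a, ∑ b, ∑ e, F a b c e := Finset.sum_comm
    _ = ∑ c, ∑ a, ∑ e, ∑ b, F a b c e :=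
        Finset.sum_congr rfl (fun c _ => Finset.sum_congr rfl (fun a _ => Finset.sum_comm))
    _ = ∑ c, ∑ e, ∑ a, ∑ b, F a b c e :=
        Finset.sum_congr rfl (fun c _ => Finset.sum_comm)

lemma obj7_eq (p : (Fin d → V) → Y → ℝ) (ps : Finset (Fin d) → ℝ)
    (h : Finset (Fin d) → (Fin d → V) → Y → ℝ)
    (σ : Finset (Fin d) → (Fin d → V) → Fin d → ℝ) :
    obj7 p ps h σ
      = ∑ s, ps s * ∑ i, ∑ x, σ s x i * ∑ y, p x y * (-Real.log (h (insert i s) x y)) := by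
  unfold obj7
  simp only [Finset.mul_sum]
  rw [sum4_comm (fun (x : Fin d → V) (y : Y) (s : Finset (Fin d)) (i : Fin d) =>
    p x y * (ps s * (σ s x i * (-Real.log (h (insert i s) x y)))))]
  apply Finset.sum_congr rfl; intro s _
  apply Finset.sum_congr rfl; intro i _
  apply Finset.sum_congr rfl; intro x _
  apply Finset.sum_congr rfl; intro y _
  ring

end Opt7

namespace Opt7

variable {d : ℕ} {V Y : Type*} [Fintype V] [DecidableEq V] [Fintype Y]

lemma lemE [Nonempty Y] (p : (Fin d → V) → Y → ℝ) (hp_pos : ∀ x y, 0 < p x y)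
    (s : Finset (Fin d)) (σ : (Fin d → V) → Fin d → ℝ)
    (hσ_meas : ∀ x x', (∀ i ∈ s, x i = x' i) → σ x = σ x') :
    ∑ i, ∑ x, σ x i * ∑ y, p x y * (-Real.log (bayes7 p (insert i s) x y))
      = ∑ x, (∑ y, p x y) * ∑ i, σ x i * cost7 p s x i := by
  have hstep : ∀ i : Fin d,
      ∑ x, σ x i * ∑ y, p x y * (-Real.log (bayes7 p (insert i s) x y))
        = ∑ x, σ x i * ((∑ y, p x y) *
            (-∑ y, bayes7 p (insert i s) x y * Real.log (bayes7 p (insert i s) x y))) :=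
    fun i => lemB p hp_pos (insert i s) (fun x => σ x i)
      (fun x x' h => congrFun (hσ_meas x x' (fun j hj => h j (Finset.mem_insert_of_mem hj))) i)
  rw [Finset.sum_congr rfl (fun i _ => hstep i), Finset.sum_comm]
  exact lemD p hp_pos s σ hσ_meas

end Opt7


open Opt7

/-- In the discrete classification setting with cross-entropy loss, the global optimum of
the joint objective over predictors and stochastic policies is achieved by the Bayes
classifier `f*(x_s) = p(y | x_s)` together with any policy concentrating all mass on
`argmax_i I(y; x_i | x_s)` (equivalently, `argmin_i` of the expected posterior entropy
`cost7`); and if the optimizing index is unique for every strict subset, the optimal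
policy is the corresponding deterministic one. -/
theorem global_optimum_classification
    {d : ℕ} {V Y : Type*} [Fintype V] [DecidableEq V] [Fintype Y]
    (p : (Fin d → V) → Y → ℝ)
    (hp_pos : ∀ x y, 0 < p x y) (hp_sum : ∑ x, ∑ y, p x y = 1)
    (ps : Finset (Fin d) → ℝ)
    (hps_nonneg : ∀ s, 0 ≤ ps s)
    (hps_pos : ∀ s, s ≠ Finset.univ → 0 < ps s)
    (hps_univ : ps Finset.univ = 0)
    (hps_sum : ∑ s, ps s = 1)
    -- an arbitrary valid predictor `f`: a pmf over `Y` depending only on observed values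
    (f : Finset (Fin d) → (Fin d → V) → Y → ℝ)
    (hf_pos : ∀ s x y, 0 < f s x y)
    (hf_sum : ∀ s x, ∑ y, f s x y = 1)
    (hf_meas : ∀ s x x', (∀ i ∈ s, x i = x' i) → f s x = f s x')
    -- an arbitrary valid stochastic policy `π`: a pmf over unqueried indices, depending
    -- only on observed values
    (π : Finset (Fin d) → (Fin d → V) → Fin d → ℝ)
    (hπ_nonneg : ∀ s x i, 0 ≤ π s x i)
    (hπ_sum : ∀ s x, s ≠ Finset.univ → ∑ i, π s x i = 1)
    (hπ_mem : ∀ s x i, s ≠ Finset.univ → i ∈ s → π s x i = 0)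
    (hπ_meas : ∀ s x x', (∀ i ∈ s, x i = x' i) → π s x = π s x')
    -- a valid policy `πstar` concentrating all mass on CMI-maximizing indices
    (πstar : Finset (Fin d) → (Fin d → V) → Fin d → ℝ)
    (hπs_nonneg : ∀ s x i, 0 ≤ πstar s x i)
    (hπs_sum : ∀ s x, s ≠ Finset.univ → ∑ i, πstar s x i = 1)
    (hπs_mem : ∀ s x i, s ≠ Finset.univ → i ∈ s → πstar s x i = 0)
    (hπs_meas : ∀ s x x', (∀ i ∈ s, x i = x' i) → πstar s x = πstar s x')
    (hπs_opt : ∀ s x i, s ≠ Finset.univ → πstar s x i ≠ 0 →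
      i ∉ s ∧ ∀ j, j ∉ s → cost7 p s x i ≤ cost7 p s x j) :
    obj7 p ps (bayes7 p) πstar ≤ obj7 p ps f π ∧
    (∀ istar : Finset (Fin d) → (Fin d → V) → Fin d,
      (∀ s x, s ≠ Finset.univ → istar s x ∉ s ∧
        ∀ j, j ∉ s → j ≠ istar s x → cost7 p s x (istar s x) < cost7 p s x j) →
      obj7 p ps f π = obj7 p ps (bayes7 p) πstar →
      ∀ s x i, s ≠ Finset.univ →
        π s x i = if i = istar s x then 1 else 0) := by
    classical
  haveI hY : Nonempty Y := by
    by_contra hY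
    rw [not_nonempty_iff] at hY
    rw [Finset.univ_eq_empty (α := Y)] at hp_sum
    simp at hp_sum
  have hpy_pos : ∀ x : Fin d → V, 0 < ∑ y, p x y :=
    fun x => Finset.sum_pos (fun y _ => hp_pos x y) Finset.univ_nonempty
  -- abbreviations
  set A1 : Finset (Fin d) → ℝ := fun s =>
    ∑ i, ∑ x, π s x i * ∑ y, p x y * (-Real.log (f (insert i s) x y)) with hA1_def
  set A2 : Finset (Fin d) → ℝ := fun s =>
    ∑ i, ∑ x, π s x i * ∑ y, p x y * (-Real.log (bayes7 p (insert i s) x y)) with hA2_def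
  set A4 : Finset (Fin d) → ℝ := fun s =>
    ∑ i, ∑ x, πstar s x i * ∑ y, p x y * (-Real.log (bayes7 p (insert i s) x y)) with hA4_def
  set Cw : (Finset (Fin d) → (Fin d → V) → Fin d → ℝ) → Finset (Fin d) → ℝ := fun σ s =>
    ∑ x, (∑ y, p x y) * ∑ i, σ s x i * cost7 p s x i with hCw_def
  -- objectives in per-s form
  have hobjf : obj7 p ps f π = ∑ s, ps s * A1 s := obj7_eq p ps f π
  have hobjb : obj7 p ps (bayes7 p) πstar = ∑ s, ps s * A4 s := obj7_eq p ps (bayes7 p) πstar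
  -- step 1: Gibbs
  have hF1 : ∀ s, A2 s ≤ A1 s := by
    intro s
    apply Finset.sum_le_sum
    intro i _
    exact gibbs7 p hp_pos (insert i s) (f (insert i s)) (hf_pos _) (hf_sum _)
      (fun x x' h => hf_meas (insert i s) x x' h)
      (fun x => π s x i) (fun x => hπ_nonneg s x i)
      (fun x x' h => congrFun (hπ_meas s x x' (fun j hj => h j (Finset.mem_insert_of_mem hj))) i)
  -- step 2: rewrite bayes cross-entropies as expected costs
  have hF2 : ∀ s, A2 s = Cw π s :=
    fun s => lemE p hp_pos s (π s) (fun x x' h => hπ_meas s x x' h)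
  have hF4 : ∀ s, A4 s = Cw πstar s :=
    fun s => lemE p hp_pos s (πstar s) (fun x x' h => hπs_meas s x x' h)
  -- step 3: pointwise optimality of πstar among policies
  have hcs : ∀ s, s ≠ Finset.univ → ∀ x, ∀ j, j ∉ s →
      ∑ i, πstar s x i * cost7 p s x i ≤ cost7 p s x j := by
    intro s hs x j hj
    calc ∑ i, πstar s x i * cost7 p s x i
        ≤ ∑ i, πstar s x i * cost7 p s x j := by
          apply Finset.sum_le_sum
          intro i _
          by_cases hi : πstar s x i = 0
          · rw [hi, zero_mul, zero_mul]
          · exact mul_le_mul_of_nonneg_left ((hπs_opt s x i hs hi).2 j hj) (hπs_nonneg s x i)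
      _ = cost7 p s x j := by rw [← Finset.sum_mul, hπs_sum s x hs, one_mul]
  have hmin : ∀ s, s ≠ Finset.univ → ∀ x,
      ∑ i, πstar s x i * cost7 p s x i ≤ ∑ i, π s x i * cost7 p s x i := by
    intro s hs x
    calc ∑ i, πstar s x i * cost7 p s x i
        = ∑ i, π s x i * ∑ k, πstar s x k * cost7 p s x k := by
          rw [← Finset.sum_mul, hπ_sum s x hs, one_mul]
      _ ≤ ∑ i, π s x i * cost7 p s x i := by
          apply Finset.sum_le_sum
          intro i _
          by_cases hi : π s x i = 0
          · rw [hi, zero_mul, zero_mul]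
          · have hi_not : i ∉ s := fun hmem => hi (hπ_mem s x i hs hmem)
            exact mul_le_mul_of_nonneg_left (hcs s hs x i hi_not) (hπ_nonneg s x i)
  have hF3 : ∀ s, s ≠ Finset.univ → Cw πstar s ≤ Cw π s := by
    intro s hs
    apply Finset.sum_le_sum
    intro x _
    exact mul_le_mul_of_nonneg_left (hmin s hs x) (hpy_pos x).le
  have hchain : ∀ s, s ≠ Finset.univ → A4 s ≤ A1 s := by
    intro s hs
    calc A4 s = Cw πstar s := hF4 s
      _ ≤ Cw π s := hF3 s hs
      _ = A2 s := (hF2 s).symm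
      _ ≤ A1 s := hF1 s
  constructor
  · rw [hobjf, hobjb]
    apply Finset.sum_le_sum
    intro s _
    by_cases hs : s = Finset.univ
    · rw [hs, hps_univ]
      simp
    · exact mul_le_mul_of_nonneg_left (hchain s hs) (hps_nonneg s)
  · intro istar histar heq
    have hsum0 : ∑ s, ps s * (A1 s - A4 s) = 0 := by
      have : ∑ s, ps s * (A1 s - A4 s) = ∑ s, (ps s * A1 s - ps s * A4 s) := by
        apply Finset.sum_congr rfl
        intro s _
        ring
      rw [this, Finset.sum_sub_distrib, ← hobjf, ← hobjb, heq, sub_self]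
    have hterm0 : ∀ s, ps s * (A1 s - A4 s) = 0 := by
      have h := (Finset.sum_eq_zero_iff_of_nonneg ?_).mp hsum0
      · exact fun s => h s (Finset.mem_univ s)
      · intro s _
        by_cases hs : s = Finset.univ
        · rw [hs, hps_univ, zero_mul]
        · exact mul_nonneg (hps_nonneg s) (sub_nonneg.mpr (hchain s hs))
    intro s x i hs
    have hA14 : A1 s = A4 s := by
      have h := hterm0 s
      rcases mul_eq_zero.mp h with h' | h'
      · exact absurd h' (hps_pos s hs).ne'
      · linarith [sub_eq_zero.mp h']
    have hCeq : Cw π s = Cw πstar s := by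
      have h1 : Cw πstar s ≤ Cw π s := hF3 s hs
      have h2 : Cw π s ≤ Cw πstar s := by
        calc Cw π s = A2 s := (hF2 s).symm
          _ ≤ A1 s := hF1 s
          _ = A4 s := hA14
          _ = Cw πstar s := hF4 s
      linarith
    -- per-x equality of expected costs
    have hx_all : ∀ x', ∑ k, π s x' k * cost7 p s x' k
        = ∑ k, πstar s x' k * cost7 p s x' k := by
      have hsum0' : ∑ x', (∑ y, p x' y) *
          (∑ k, π s x' k * cost7 p s x' k - ∑ k, πstar s x' k * cost7 p s x' k) = 0 := by
        have : ∀ x' : Fin d → V, (∑ y, p x' y) *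
            (∑ k, π s x' k * cost7 p s x' k - ∑ k, πstar s x' k * cost7 p s x' k)
            = (∑ y, p x' y) * ∑ k, π s x' k * cost7 p s x' k
              - (∑ y, p x' y) * ∑ k, πstar s x' k * cost7 p s x' k := fun x' => by ring
        rw [Finset.sum_congr rfl (fun x' _ => this x'), Finset.sum_sub_distrib]
        have := hCeq
        rw [hCw_def] at this
        simpa using sub_eq_zero.mpr this
      have hnn : ∀ x' : Fin d → V, (0:ℝ) ≤ (∑ y, p x' y) *
          (∑ k, π s x' k * cost7 p s x' k - ∑ k, πstar s x' k * cost7 p s x' k) :=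
        fun x' => mul_nonneg (hpy_pos x').le (sub_nonneg.mpr (hmin s hs x'))
      intro x'
      have h := (Finset.sum_eq_zero_iff_of_nonneg (fun x' _ => hnn x')).mp hsum0' x'
        (Finset.mem_univ x')
      rcases mul_eq_zero.mp h with h' | h'
      · exact absurd h' (hpy_pos x').ne'
      · linarith [sub_eq_zero.mp h']
    obtain ⟨histar_notmem, histar_strict⟩ := histar s x hs
    -- πstar is concentrated on istar
    have hstar_supp : ∀ k, k ≠ istar s x → πstar s x k = 0 := by
      intro k hk
      by_contra hk0
      obtain ⟨hknot, hkmin⟩ := hπs_opt s x k hs hk0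
      have h1 : cost7 p s x (istar s x) < cost7 p s x k := histar_strict k hknot hk
      have h2 : cost7 p s x k ≤ cost7 p s x (istar s x) := hkmin _ histar_notmem
      linarith
    have hstar_eq : ∑ k, πstar s x k * cost7 p s x k = cost7 p s x (istar s x) := by
      have : ∑ k, πstar s x k * cost7 p s x k
          = ∑ k, πstar s x k * cost7 p s x (istar s x) := by
        apply Finset.sum_congr rfl
        intro k _
        by_cases hk : k = istar s x
        · rw [hk]
        · rw [hstar_supp k hk, zero_mul, zero_mul]
      rw [this, ← Finset.sum_mul, hπs_sum s x hs, one_mul]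
    have hπ_eq : ∑ k, π s x k * cost7 p s x k = cost7 p s x (istar s x) :=
      (hx_all x).trans hstar_eq
    have hterm : ∀ k, π s x k * (cost7 p s x k - cost7 p s x (istar s x)) = 0 := by
      have hsumz : ∑ k, π s x k * (cost7 p s x k - cost7 p s x (istar s x)) = 0 := by
        have : ∀ k : Fin d, π s x k * (cost7 p s x k - cost7 p s x (istar s x))
            = π s x k * cost7 p s x k - π s x k * cost7 p s x (istar s x) := fun k => by ring
        rw [Finset.sum_congr rfl (fun k _ => this k), Finset.sum_sub_distrib,
          ← Finset.sum_mul, hπ_sum s x hs, one_mul, hπ_eq, sub_self]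
      have hnn : ∀ k ∈ (Finset.univ : Finset (Fin d)),
          (0:ℝ) ≤ π s x k * (cost7 p s x k - cost7 p s x (istar s x)) := by
        intro k _
        by_cases hk : k = istar s x
        · rw [hk, sub_self, mul_zero]
        · by_cases hks : k ∈ s
          · rw [hπ_mem s x k hs hks, zero_mul]
          · exact mul_nonneg (hπ_nonneg s x k)
              (sub_nonneg.mpr (histar_strict k hks hk).le)
      exact fun k => (Finset.sum_eq_zero_iff_of_nonneg hnn).mp hsumz k (Finset.mem_univ k)
    have hothers : ∀ k, k ≠ istar s x → π s x k = 0 := by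
      intro k hk
      by_cases hks : k ∈ s
      · exact hπ_mem s x k hs hks
      · rcases mul_eq_zero.mp (hterm k) with h' | h'
        · exact h'
        · exact absurd (sub_eq_zero.mp h') (histar_strict k hks hk).ne'
    by_cases hi : i = istar s x
    · rw [if_pos hi, hi]
      have hsum1 := hπ_sum s x hs
      rw [Finset.sum_eq_single_of_mem (istar s x) (Finset.mem_univ _)
        (fun k _ hk => hothers k hk)] at hsum1
      exact hsum1
    · rw [if_neg hi]
      exact hothers i hi
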